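/- Let f : [−1,1] → ℝ be given by a power series f(t) = Σ_{k=0}^∞ a_k t^k convergent on [−1,1], with a_k ≥ 0 for all k and a_k > 0 for infinitely many k, and define the kernel K(x,x') = f(⟨x,x'⟩) on the unit sphere S^d ⊂ ℝ^{d+1}. Then for every finite collection of pairwise distinct points x₁,…,xₙ in the open upper hemisphere S^d₊ = {x ∈ S^d : x_{d+1} > 0}, the Gram matrix (K(x_i,x_j))_{1≤i,j≤n} is positive definite. -/

import Mathlib

open scoped RealInnerProductSpace

open Finset Filter

private lemma aux_gram_pow_nonneg {m n : ℕ} (y : Fin n → EuclideanSpace ℝ (Fin m))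
    (c : Fin n → ℝ) (k : ℕ) :
    0 ≤ ∑ i, ∑ j, c i * c j * (⟪y i, y j⟫ : ℝ) ^ k := by
  have hinner : ∀ i j : Fin n, (⟪y i, y j⟫ : ℝ) = ∑ l, y i l * y j l := by
    intro i j
    simp [PiLp.inner_apply, RCLike.inner_apply, mul_comm]
  have expand : ∀ i j : Fin n, (⟪y i, y j⟫ : ℝ) ^ k =
      ∑ s : Fin k → Fin m, (∏ mm, y i (s mm)) * (∏ mm, y j (s mm)) := by
    intro i j
    rw [hinner]
    have h1 : (∑ l, y i l * y j l) ^ k = ∏ _mm : Fin k, (∑ l, y i l * y j l) := by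
      simp
    rw [h1, Finset.prod_univ_sum]
    simp [Finset.prod_mul_distrib]
  have key : ∑ i, ∑ j, c i * c j * (⟪y i, y j⟫ : ℝ) ^ k =
      ∑ s : Fin k → Fin m, (∑ i, c i * ∏ mm, y i (s mm)) ^ 2 := by
    simp_rw [expand, Finset.mul_sum]
    calc ∑ i, ∑ j, ∑ s : Fin k → Fin m,
          c i * c j * ((∏ mm, y i (s mm)) * ∏ mm, y j (s mm))
        = ∑ i, ∑ s : Fin k → Fin m, ∑ j,
          c i * c j * ((∏ mm, y i (s mm)) * ∏ mm, y j (s mm)) :=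
          Finset.sum_congr rfl fun _ _ => Finset.sum_comm
      _ = ∑ s : Fin k → Fin m, ∑ i, ∑ j,
          c i * c j * ((∏ mm, y i (s mm)) * ∏ mm, y j (s mm)) := Finset.sum_comm
      _ = ∑ s : Fin k → Fin m, (∑ i, c i * ∏ mm, y i (s mm)) ^ 2 := by
          refine Finset.sum_congr rfl fun s _ => ?_
          rw [sq, Finset.sum_mul_sum]
          exact Finset.sum_congr rfl fun i _ => Finset.sum_congr rfl fun j _ => by ring
  rw [key]
  exact Finset.sum_nonneg fun s _ => sq_nonneg _


/-- **Inner-product kernels with infinitely many positive power-series coefficients are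
positive definite on the open upper hemisphere.**  If `f(t) = Σ aₖ tᵏ` on `[-1,1]` with
`aₖ ≥ 0` for all `k` and `aₖ > 0` for infinitely many `k`, then for pairwise distinct points
`x₁,…,xₙ` on the unit sphere of `ℝ^{d+1}` whose last coordinate is positive, the Gram matrix
`(f(⟨xᵢ,xⱼ⟩))` is positive definite. -/
theorem innerProductKernel_posDef_upperHemisphere
    (d : ℕ) (a : ℕ → ℝ) (ha : ∀ k, 0 ≤ a k) (ha' : {k : ℕ | 0 < a k}.Infinite)
    (f : ℝ → ℝ) (hf : ∀ t ∈ Set.Icc (-1 : ℝ) 1, HasSum (fun k => a k * t ^ k) (f t))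
    (n : ℕ) (x : Fin n → EuclideanSpace ℝ (Fin (d + 1)))
    (hsphere : ∀ i, ‖x i‖ = 1) (hupper : ∀ i, 0 < x i (Fin.last d))
    (hx : Function.Injective x) :
    (Matrix.of fun i j => f ⟪x i, x j⟫).PosDef := by
  -- basic facts about the inner products
  have hself : ∀ i, (⟪x i, x i⟫ : ℝ) = 1 := by
    intro i
    rw [real_inner_self_eq_norm_sq, hsphere]
    norm_num
  have habs : ∀ i j, i ≠ j → |(⟪x i, x j⟫ : ℝ)| < 1 := by
    intro i j hij
    rw [abs_lt]
    constructor
    · have hne : x i ≠ -x j := by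
        intro h
        have h1 := hupper i
        have h2 := hupper j
        rw [h] at h1
        have : (-x j) (Fin.last d) = -(x j (Fin.last d)) := rfl
        rw [this] at h1
        linarith
      have hnorm : ‖(-x j : EuclideanSpace ℝ (Fin (d+1)))‖ = 1 := by
        rw [norm_neg, hsphere]
      have := (inner_lt_one_iff_real_of_norm_eq_one (hsphere i) hnorm).mpr hne
      rw [inner_neg_right] at this
      linarith
    · exact (inner_lt_one_iff_real_of_norm_eq_one (hsphere i) (hsphere j)).mpr
        fun h => hij (hx h)
  have hmem : ∀ i j, (⟪x i, x j⟫ : ℝ) ∈ Set.Icc (-1 : ℝ) 1 := by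
    intro i j
    have h := abs_real_inner_le_norm (x i) (x j)
    rw [hsphere, hsphere, mul_one] at h
    exact abs_le.mp h
  rw [Matrix.posDef_iff_dotProduct_mulVec]
  constructor
  · unfold Matrix.IsHermitian
    ext i j
    simp only [Matrix.conjTranspose_apply, Matrix.of_apply, star_trivial]
    exact congrArg f (real_inner_comm _ _)
  intro c hc
  -- the quadratic form for the k-th power
  set S : ℕ → ℝ := fun k => ∑ i, ∑ j, c i * c j * (⟪x i, x j⟫ : ℝ) ^ k with hSdef
  have hSnonneg : ∀ k, 0 ≤ S k := fun k => aux_gram_pow_nonneg x c k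
  -- the full quadratic form as a convergent series
  have hsumQ : HasSum (fun k => ∑ i, ∑ j, c i * c j * (a k * (⟪x i, x j⟫ : ℝ) ^ k))
      (∑ i, ∑ j, c i * c j * f ⟪x i, x j⟫) := by
    refine hasSum_sum fun i _ => hasSum_sum fun j _ => ?_
    exact (hf _ (hmem i j)).mul_left (c i * c j)
  have hterm : ∀ k, (∑ i, ∑ j, c i * c j * (a k * (⟪x i, x j⟫ : ℝ) ^ k))
      = a k * S k := by
    intro k
    rw [hSdef, Finset.mul_sum]
    refine Finset.sum_congr rfl fun i _ => ?_
    rw [Finset.mul_sum]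
    exact Finset.sum_congr rfl fun j _ => by ring
  simp only [hterm] at hsumQ
  -- decompose S k into diagonal and off-diagonal parts
  set D : ℝ := ∑ i, c i ^ 2 with hDdef
  have hD : 0 < D := by
    obtain ⟨i, hi⟩ := Function.ne_iff.mp hc
    exact Finset.sum_pos' (fun j _ => sq_nonneg _)
      ⟨i, Finset.mem_univ i, pow_two_pos_of_ne_zero hi⟩
  set E : ℕ → ℝ := fun k =>
    ∑ p ∈ Finset.univ.offDiag, c p.1 * c p.2 * (⟪x p.1, x p.2⟫ : ℝ) ^ k with hEdef
  have hSE : ∀ k, S k = D + E k := by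
    intro k
    have h1 : S k = ∑ p ∈ Finset.univ ×ˢ Finset.univ,
        c p.1 * c p.2 * (⟪x p.1, x p.2⟫ : ℝ) ^ k := by
      rw [hSdef]
      exact (Finset.sum_product' ..).symm
    rw [h1, ← Finset.diag_union_offDiag (Finset.univ : Finset (Fin n)),
      Finset.sum_union (Finset.disjoint_diag_offDiag _), Finset.sum_diag]
    congr 1
    refine Finset.sum_congr rfl fun i _ => ?_
    rw [hself i]
    ring
  -- the off-diagonal part tends to zero
  have hE0 : Tendsto E atTop (nhds 0) := by
    rw [hEdef]
    have : Tendsto (fun k => ∑ p ∈ Finset.univ.offDiag,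
        c p.1 * c p.2 * (⟪x p.1, x p.2⟫ : ℝ) ^ k) atTop
        (nhds (∑ p ∈ (Finset.univ : Finset (Fin n)).offDiag, (0 : ℝ))) := by
      refine tendsto_finset_sum _ fun p hp => ?_
      have hp' : p.1 ≠ p.2 := (Finset.mem_offDiag.mp hp).2.2
      have habsp : ‖(⟪x p.1, x p.2⟫ : ℝ)‖ < 1 := by
        rw [Real.norm_eq_abs]; exact habs _ _ hp'
      have := (tendsto_pow_atTop_nhds_zero_of_norm_lt_one habsp).const_mul
        (c p.1 * c p.2)
      simpa using this
    simpa using this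
  -- choose a large index with positive coefficient
  have hev : ∀ᶠ k in atTop, -D < E k :=
    hE0.eventually (eventually_gt_nhds (by linarith))
  obtain ⟨K, hK⟩ := eventually_atTop.mp hev
  obtain ⟨k0, hk0mem, hk0K⟩ := ha'.exists_gt K
  have hk0pos : 0 < a k0 := hk0mem
  have hSk0 : 0 < S k0 := by
    rw [hSE k0]
    have := hK k0 hk0K.le
    linarith
  -- conclude
  have hquad : dotProduct (star c)
      ((Matrix.of fun i j => f ⟪x i, x j⟫).mulVec c)
      = ∑ i, ∑ j, c i * c j * f ⟪x i, x j⟫ := by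
    simp only [star_trivial, dotProduct, Matrix.mulVec, Matrix.of_apply,
      Finset.mul_sum]
    exact Finset.sum_congr rfl fun i _ => Finset.sum_congr rfl fun j _ => by
      ring
  rw [hquad]
  calc (0 : ℝ) < a k0 * S k0 := mul_pos hk0pos hSk0
    _ ≤ ∑ i, ∑ j, c i * c j * f ⟪x i, x j⟫ :=
      le_hasSum hsumQ k0 fun k _ => mul_nonneg (ha k) (hSnonneg k)
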